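/- Under the hypotheses of the perturbed-chain bound, the Cesàro average of the marginals satisfies \(\left\|\mu - \frac{1}{M}\sum_{t=0}^{M-1} \nu \hat P_0 \hat P_1 \cdots \hat P_t \right\|_{TV} \le \frac{(1-(1-\alpha)^M)\|\mu-\nu\|_{TV}}{M\alpha} - \frac{\epsilon(1-(1-\alpha)^M)}{M\alpha^2} + \frac{\epsilon}{\alpha}\), where \(\hat P_0\) is the identity kernel. -/

import Mathlib

open scoped ENNReal


open MeasureTheory

noncomputable def tvDist {Θ : Type*} [MeasurableSpace Θ] (μ ν : Measure Θ) : ℝ :=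
  sSup {r : ℝ | ∃ A : Set Θ, MeasurableSet A ∧ r = |(μ A).toReal - (ν A).toReal|}

/-- `iterBind ν Ps t` is the marginal `ν P̂₀ P̂₁ ⋯ P̂_t` (with `P̂₀ = I`) of the
inhomogeneous chain at time `t`. -/
noncomputable def iterBind {Θ : Type*} [MeasurableSpace Θ]
    (ν : Measure Θ) (Ps : ℕ → Θ → Measure Θ) : ℕ → Measure Θ
  | 0 => ν
  | n + 1 => (iterBind ν Ps n).bind (Ps (n + 1))

section Helpers

variable {Θ : Type*} [MeasurableSpace Θ]

lemma toReal_prob_le_one (μ : Measure Θ) [IsProbabilityMeasure μ] (A : Set Θ) :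
    (μ A).toReal ≤ 1 := by
  simpa using ENNReal.toReal_mono ENNReal.one_ne_top (prob_le_one (μ := μ) (s := A))

lemma tvDist_mem_le_one (μ ν : Measure Θ) [IsProbabilityMeasure μ] [IsProbabilityMeasure ν] :
    ∀ r ∈ {r : ℝ | ∃ A : Set Θ, MeasurableSet A ∧ r = |(μ A).toReal - (ν A).toReal|}, r ≤ 1 := by
  rintro r ⟨A, hA, rfl⟩
  have h1 := toReal_prob_le_one μ A
  have h2 := toReal_prob_le_one ν A
  have h3 : (0:ℝ) ≤ (μ A).toReal := ENNReal.toReal_nonneg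
  have h4 : (0:ℝ) ≤ (ν A).toReal := ENNReal.toReal_nonneg
  rw [abs_le]; constructor <;> linarith

lemma tvDist_bddAbove (μ ν : Measure Θ) [IsProbabilityMeasure μ] [IsProbabilityMeasure ν] :
    BddAbove {r : ℝ | ∃ A : Set Θ, MeasurableSet A ∧ r = |(μ A).toReal - (ν A).toReal|} :=
  ⟨1, fun r hr => tvDist_mem_le_one μ ν r hr⟩

lemma abs_le_tvDist (μ ν : Measure Θ) [IsProbabilityMeasure μ] [IsProbabilityMeasure ν]
    {A : Set Θ} (hA : MeasurableSet A) :
    |(μ A).toReal - (ν A).toReal| ≤ tvDist μ ν :=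
  le_csSup (tvDist_bddAbove μ ν) ⟨A, hA, rfl⟩

lemma tvDist_nonneg (μ ν : Measure Θ) [IsProbabilityMeasure μ] [IsProbabilityMeasure ν] :
    0 ≤ tvDist μ ν := by
  have := abs_le_tvDist μ ν MeasurableSet.empty
  simp only [measure_empty] at this
  simpa using le_trans (abs_nonneg _) this

lemma tvDist_le (μ ν : Measure Θ) {c : ℝ} (hc : 0 ≤ c)
    (h : ∀ A : Set Θ, MeasurableSet A → |(μ A).toReal - (ν A).toReal| ≤ c) :
    tvDist μ ν ≤ c :=
  Real.sSup_le (by rintro r ⟨A, hA, rfl⟩; exact h A hA) hc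

lemma tvDist_triangle (μ ρ σ : Measure Θ) [IsProbabilityMeasure μ] [IsProbabilityMeasure ρ]
    [IsProbabilityMeasure σ] :
    tvDist μ σ ≤ tvDist μ ρ + tvDist ρ σ := by
  apply tvDist_le _ _ (add_nonneg (tvDist_nonneg μ ρ) (tvDist_nonneg ρ σ))
  intro A hA
  calc |(μ A).toReal - (σ A).toReal|
      ≤ |(μ A).toReal - (ρ A).toReal| + |(ρ A).toReal - (σ A).toReal| := abs_sub_le _ _ _
    _ ≤ tvDist μ ρ + tvDist ρ σ := add_le_add (abs_le_tvDist μ ρ hA) (abs_le_tvDist ρ σ hA)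

lemma le_add_ofReal {a b : ℝ≥0∞} (ha : a ≠ ⊤) (hb : b ≠ ⊤) {c : ℝ} (hc : 0 ≤ c)
    (h : a.toReal ≤ b.toReal + c) : a ≤ b + ENNReal.ofReal c := by
  rw [← ENNReal.ofReal_toReal ha, ← ENNReal.ofReal_toReal hb,
    ← ENNReal.ofReal_add ENNReal.toReal_nonneg hc]
  exact ENNReal.ofReal_le_ofReal h

lemma abs_toReal_le {a b : ℝ≥0∞} (ha : a ≠ ⊤) (hb : b ≠ ⊤) {c : ℝ} (hc : 0 ≤ c)
    (h1 : a ≤ b + ENNReal.ofReal c) (h2 : b ≤ a + ENNReal.ofReal c) :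
    |a.toReal - b.toReal| ≤ c := by
  rw [abs_sub_le_iff]
  constructor
  · have := ENNReal.toReal_mono (by finiteness) h1
    rw [ENNReal.toReal_add hb ENNReal.ofReal_ne_top, ENNReal.toReal_ofReal hc] at this
    linarith
  · have := ENNReal.toReal_mono (by finiteness) h2
    rw [ENNReal.toReal_add ha ENNReal.ofReal_ne_top, ENNReal.toReal_ofReal hc] at this
    linarith

lemma isProb_bind (μ : Measure Θ) [IsProbabilityMeasure μ] (P : Θ → Measure Θ)
    (hPm : Measurable P) (hP : ∀ θ, IsProbabilityMeasure (P θ)) :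
    IsProbabilityMeasure (μ.bind P) := by
  constructor
  rw [Measure.bind_apply MeasurableSet.univ hPm.aemeasurable]
  have : ∀ θ, (P θ) Set.univ = 1 := fun θ => (hP θ).measure_univ
  simp [this]

/-- One-sided contraction bound for the pushforward under a Doeblin kernel. -/
lemma bind_le_bind (P : Θ → Measure Θ) (hPm : Measurable P)
    (hP : ∀ θ, IsProbabilityMeasure (P θ))
    {α : ℝ} (hα1 : α < 1)
    (hD : ∀ θ ζ : Θ, tvDist (P θ) (P ζ) ≤ 1 - α)
    (μ ρ : Measure Θ) [IsProbabilityMeasure μ] [IsProbabilityMeasure ρ]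
    {A : Set Θ} (hA : MeasurableSet A) :
    (μ.bind P) A ≤ (ρ.bind P) A + ENNReal.ofReal (1 - α) * ENNReal.ofReal (tvDist μ ρ) := by
  have hα' : (0:ℝ) ≤ 1 - α := by linarith
  obtain ⟨S, hS, hS1, hS2⟩ := hahn_decomposition (μ := μ) (ν := ρ)
  set f : Θ → ℝ≥0∞ := fun θ => P θ A with hf
  have hfm : Measurable f := (Measure.measurable_coe hA).comp hPm
  have hf1 : ∀ θ, f θ ≤ 1 := fun θ => prob_le_one
  set L : ℝ≥0∞ := ENNReal.ofReal (1 - α) with hL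
  have hne : Nonempty Θ := by
    by_contra h
    rw [not_nonempty_iff] at h
    have h1 : (μ : Measure Θ) Set.univ = 1 := measure_univ
    rw [Set.univ_eq_empty_iff.mpr h, measure_empty] at h1
    exact zero_ne_one h1
  set m : ℝ≥0∞ := ⨅ θ, f θ with hm
  have hm_le : ∀ θ, m ≤ f θ := fun θ => iInf_le _ _
  have hm_ne : m ≠ ⊤ :=
    ne_top_of_le_ne_top ENNReal.one_ne_top ((hm_le hne.some).trans (hf1 _))
  have hosc : ∀ θ, f θ ≤ m + L := by
    intro θ
    have hpt : ∀ ζ, f θ ≤ f ζ + L := by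
      intro ζ
      apply le_add_ofReal (measure_ne_top _ _) (measure_ne_top _ _) hα'
      have h1 := (abs_le_tvDist (P θ) (P ζ) hA).trans (hD θ ζ)
      rw [abs_le] at h1
      linarith [h1.2]
    have h2 : f θ - L ≤ m := le_iInf fun ζ => tsub_le_iff_right.mpr (hpt ζ)
    calc f θ ≤ (f θ - L) + L := le_tsub_add
      _ ≤ m + L := add_le_add_left h2 _
  set g : Θ → ℝ≥0∞ := fun θ => f θ - m with hg
  have hgm : Measurable g := hfm.sub measurable_const
  have hgL : ∀ θ, g θ ≤ L := fun θ => tsub_le_iff_right.mpr ((hosc θ).trans_eq (add_comm m L))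
  have hfg : ∀ θ, f θ = g θ + m := fun θ => (tsub_add_cancel_of_le (hm_le θ)).symm
  -- restrict inequalities from Hahn decomposition
  have hres : μ.restrict Sᶜ ≤ ρ.restrict Sᶜ := by
    rw [Measure.le_iff]
    intro s hs
    rw [Measure.restrict_apply hs, Measure.restrict_apply hs]
    exact hS2 _ (hs.inter hS.compl) Set.inter_subset_right
  have hres2 : ρ.restrict S ≤ μ.restrict S := by
    rw [Measure.le_iff]
    intro s hs
    rw [Measure.restrict_apply hs, Measure.restrict_apply hs]
    exact hS1 _ (hs.inter hS) Set.inter_subset_right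
  have hSd : μ S - ρ S ≤ ENNReal.ofReal (tvDist μ ρ) := by
    rw [tsub_le_iff_right, add_comm]
    apply le_add_ofReal (measure_ne_top _ _) (measure_ne_top _ _) (tvDist_nonneg μ ρ)
    have h1 := abs_le_tvDist μ ρ hS
    rw [abs_le] at h1
    linarith [h1.2]
  -- the key integral inequality for g
  have h2 : ∫⁻ θ in S, g θ ∂μ ≤ ∫⁻ θ in S, g θ ∂ρ + L * (μ S - ρ S) := by
    have hdec : μ.restrict S = (μ.restrict S - ρ.restrict S) + ρ.restrict S :=
      (Measure.sub_add_cancel_of_le hres2).symm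
    have hsub : ∫⁻ θ, g θ ∂(μ.restrict S - ρ.restrict S) ≤ L * (μ S - ρ S) := by
      calc ∫⁻ θ, g θ ∂(μ.restrict S - ρ.restrict S)
          ≤ ∫⁻ _, L ∂(μ.restrict S - ρ.restrict S) := lintegral_mono fun θ => hgL θ
        _ = L * (μ.restrict S - ρ.restrict S) Set.univ := lintegral_const L
        _ = L * (μ S - ρ S) := by
            rw [Measure.sub_apply MeasurableSet.univ hres2,
              Measure.restrict_apply MeasurableSet.univ,
              Measure.restrict_apply MeasurableSet.univ, Set.univ_inter]
    calc ∫⁻ θ in S, g θ ∂μ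
        = ∫⁻ θ, g θ ∂((μ.restrict S - ρ.restrict S) + ρ.restrict S) := by rw [← hdec]
      _ = ∫⁻ θ, g θ ∂(μ.restrict S - ρ.restrict S) + ∫⁻ θ in S, g θ ∂ρ :=
          lintegral_add_measure _ _ _
      _ ≤ L * (μ S - ρ S) + ∫⁻ θ in S, g θ ∂ρ := add_le_add_left hsub _
      _ = ∫⁻ θ in S, g θ ∂ρ + L * (μ S - ρ S) := add_comm _ _
  have h1 : ∫⁻ θ in Sᶜ, g θ ∂μ ≤ ∫⁻ θ in Sᶜ, g θ ∂ρ := lintegral_mono' hres le_rfl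
  have key : ∫⁻ θ, g θ ∂μ ≤ ∫⁻ θ, g θ ∂ρ + L * (μ S - ρ S) := by
    calc ∫⁻ θ, g θ ∂μ
        = ∫⁻ θ in S, g θ ∂μ + ∫⁻ θ in Sᶜ, g θ ∂μ := (lintegral_add_compl g hS).symm
      _ ≤ (∫⁻ θ in S, g θ ∂ρ + L * (μ S - ρ S)) + ∫⁻ θ in Sᶜ, g θ ∂ρ := add_le_add h2 h1
      _ = (∫⁻ θ in S, g θ ∂ρ + ∫⁻ θ in Sᶜ, g θ ∂ρ) + L * (μ S - ρ S) := by ring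
      _ = ∫⁻ θ, g θ ∂ρ + L * (μ S - ρ S) := by rw [lintegral_add_compl g hS]
  -- transfer back to f
  have e1 : ∫⁻ θ, f θ ∂μ = ∫⁻ θ, g θ ∂μ + m := by
    calc ∫⁻ θ, f θ ∂μ = ∫⁻ θ, (g θ + m) ∂μ := lintegral_congr hfg
      _ = ∫⁻ θ, g θ ∂μ + m := by
          rw [lintegral_add_right _ measurable_const, lintegral_const, measure_univ, mul_one]
  have e2 : ∫⁻ θ, f θ ∂ρ = ∫⁻ θ, g θ ∂ρ + m := by
    calc ∫⁻ θ, f θ ∂ρ = ∫⁻ θ, (g θ + m) ∂ρ := lintegral_congr hfg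
      _ = ∫⁻ θ, g θ ∂ρ + m := by
          rw [lintegral_add_right _ measurable_const, lintegral_const, measure_univ, mul_one]
  rw [Measure.bind_apply hA hPm.aemeasurable, Measure.bind_apply hA hPm.aemeasurable]
  calc ∫⁻ θ, f θ ∂μ = ∫⁻ θ, g θ ∂μ + m := e1
    _ ≤ (∫⁻ θ, g θ ∂ρ + L * (μ S - ρ S)) + m := add_le_add_left key _
    _ = (∫⁻ θ, g θ ∂ρ + m) + L * (μ S - ρ S) := by ring
    _ = ∫⁻ θ, f θ ∂ρ + L * (μ S - ρ S) := by rw [e2]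
    _ ≤ ∫⁻ θ, f θ ∂ρ + L * ENNReal.ofReal (tvDist μ ρ) :=
        add_le_add_right (mul_le_mul_right hSd L) _

lemma tvDist_bind_contract (P : Θ → Measure Θ) (hPm : Measurable P)
    (hP : ∀ θ, IsProbabilityMeasure (P θ))
    {α : ℝ} (hα1 : α < 1)
    (hD : ∀ θ ζ : Θ, tvDist (P θ) (P ζ) ≤ 1 - α)
    (μ ρ : Measure Θ) [IsProbabilityMeasure μ] [IsProbabilityMeasure ρ] :
    tvDist (μ.bind P) (ρ.bind P) ≤ (1 - α) * tvDist μ ρ := by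
  have hα' : (0:ℝ) ≤ 1 - α := by linarith
  haveI := isProb_bind μ P hPm hP
  haveI := isProb_bind ρ P hPm hP
  apply tvDist_le _ _ (mul_nonneg hα' (tvDist_nonneg μ ρ))
  intro A hA
  have hof : ENNReal.ofReal ((1 - α) * tvDist μ ρ)
      = ENNReal.ofReal (1 - α) * ENNReal.ofReal (tvDist μ ρ) := ENNReal.ofReal_mul hα'
  apply abs_toReal_le (measure_ne_top _ _) (measure_ne_top _ _)
    (mul_nonneg hα' (tvDist_nonneg μ ρ))
  · rw [hof]; exact bind_le_bind P hPm hP hα1 hD μ ρ hA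
  · rw [hof]
    have := bind_le_bind P hPm hP hα1 hD ρ μ hA
    have hsymm : tvDist ρ μ = tvDist μ ρ := by
      unfold tvDist
      congr 1
      ext r
      constructor
      · rintro ⟨A, hA, rfl⟩; exact ⟨A, hA, (abs_sub_comm _ _)⟩
      · rintro ⟨A, hA, rfl⟩; exact ⟨A, hA, (abs_sub_comm _ _)⟩
    rwa [hsymm] at this

lemma tvDist_bind_perturb (ρ : Measure Θ) [IsProbabilityMeasure ρ]
    (P Q : Θ → Measure Θ) (hPm : Measurable P) (hQm : Measurable Q)
    (hP : ∀ θ, IsProbabilityMeasure (P θ)) (hQ : ∀ θ, IsProbabilityMeasure (Q θ))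
    {ε : ℝ} (hε0 : 0 ≤ ε) (h : ∀ θ, tvDist (Q θ) (P θ) ≤ ε) :
    tvDist (ρ.bind P) (ρ.bind Q) ≤ ε := by
  haveI := isProb_bind ρ P hPm hP
  haveI := isProb_bind ρ Q hQm hQ
  apply tvDist_le _ _ hε0
  intro A hA
  have hpt1 : ∀ θ, P θ A ≤ Q θ A + ENNReal.ofReal ε := by
    intro θ
    apply le_add_ofReal (measure_ne_top _ _) (measure_ne_top _ _) hε0
    have h1 := (abs_le_tvDist (Q θ) (P θ) hA).trans (h θ)
    rw [abs_le] at h1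
    linarith [h1.1]
  have hpt2 : ∀ θ, Q θ A ≤ P θ A + ENNReal.ofReal ε := by
    intro θ
    apply le_add_ofReal (measure_ne_top _ _) (measure_ne_top _ _) hε0
    have h1 := (abs_le_tvDist (Q θ) (P θ) hA).trans (h θ)
    rw [abs_le] at h1
    linarith [h1.2]
  apply abs_toReal_le (measure_ne_top _ _) (measure_ne_top _ _) hε0
  · rw [Measure.bind_apply hA hPm.aemeasurable, Measure.bind_apply hA hQm.aemeasurable]
    calc ∫⁻ θ, P θ A ∂ρ ≤ ∫⁻ θ, (Q θ A + ENNReal.ofReal ε) ∂ρ := lintegral_mono hpt1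
      _ = ∫⁻ θ, Q θ A ∂ρ + ENNReal.ofReal ε := by
          rw [lintegral_add_right _ measurable_const, lintegral_const, measure_univ, mul_one]
  · rw [Measure.bind_apply hA hPm.aemeasurable, Measure.bind_apply hA hQm.aemeasurable]
    calc ∫⁻ θ, Q θ A ∂ρ ≤ ∫⁻ θ, (P θ A + ENNReal.ofReal ε) ∂ρ := lintegral_mono hpt2
      _ = ∫⁻ θ, P θ A ∂ρ + ENNReal.ofReal ε := by
          rw [lintegral_add_right _ measurable_const, lintegral_const, measure_univ, mul_one]

end Helpers

theorem stmt6 {Θ : Type*} [MeasurableSpace Θ]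
    (P : Θ → Measure Θ) (hPmeas : Measurable P)
    (hP : ∀ θ, IsProbabilityMeasure (P θ))
    (α : ℝ) (hα0 : 0 < α) (hα1 : α < 1)
    (hDoeblin : ∀ θ ζ : Θ, tvDist (P θ) (P ζ) ≤ 1 - α)
    (Phat : ℕ → Θ → Measure Θ) (hPhatmeas : ∀ t, Measurable (Phat t))
    (hPhat : ∀ t θ, IsProbabilityMeasure (Phat t θ))
    (ε : ℝ) (hε0 : 0 ≤ ε) (hε : ε < min (α / 2) ((1 - α) / 2))
    (hclose : ∀ t θ, tvDist (Phat t θ) (P θ) ≤ ε)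
    (μ ν : Measure Θ) [IsProbabilityMeasure μ] [IsProbabilityMeasure ν]
    (hinv : μ.bind P = μ)
    (M : ℕ) (hM : 1 ≤ M) :
    tvDist μ ((M : ENNReal)⁻¹ • ∑ t ∈ Finset.range M, iterBind ν Phat t) ≤
      (1 - (1 - α) ^ M) * tvDist μ ν / (M * α)
        - ε * (1 - (1 - α) ^ M) / (M * α ^ 2) + ε / α := by
  have hα' : (0:ℝ) ≤ 1 - α := by linarith
  have hM0 : (0:ℝ) < (M:ℝ) := by exact_mod_cast hM
  have hiter : ∀ t, IsProbabilityMeasure (iterBind ν Phat t) := by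
    intro t
    induction t with
    | zero => simpa [iterBind] using ‹IsProbabilityMeasure ν›
    | succ n ih =>
      haveI := ih
      exact isProb_bind _ _ (hPhatmeas _) (hPhat _)
  have hit0 : iterBind ν Phat 0 = ν := rfl
  have hitS : ∀ n, iterBind ν Phat (n + 1) = (iterBind ν Phat n).bind (Phat (n + 1)) :=
    fun n => rfl
  set d : ℕ → ℝ := fun t => tvDist μ (iterBind ν Phat t) with hd
  have hd0 : d 0 = tvDist μ ν := by rw [hd]; simp [hit0]
  have hdnn : ∀ t, 0 ≤ d t := by
    intro t
    haveI := hiter t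
    exact tvDist_nonneg μ _
  have hstep : ∀ t, d (t + 1) ≤ (1 - α) * d t + ε := by
    intro t
    haveI := hiter t
    haveI := hiter (t + 1)
    haveI := isProb_bind (iterBind ν Phat t) P hPmeas hP
    have htri : d (t + 1) ≤ tvDist μ ((iterBind ν Phat t).bind P)
        + tvDist ((iterBind ν Phat t).bind P) (iterBind ν Phat (t + 1)) :=
      tvDist_triangle _ _ _
    have hcon : tvDist μ ((iterBind ν Phat t).bind P) ≤ (1 - α) * d t := by
      conv_lhs => rw [← hinv]
      exact tvDist_bind_contract P hPmeas hP hα1 hDoeblin _ _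
    have hper : tvDist ((iterBind ν Phat t).bind P) (iterBind ν Phat (t + 1)) ≤ ε := by
      rw [hitS t]
      exact tvDist_bind_perturb _ P (Phat (t + 1)) hPmeas (hPhatmeas _) hP (hPhat _)
        hε0 (hclose (t + 1))
    linarith
  have hbound : ∀ t, d t ≤ (1 - α) ^ t * d 0 + ε * (1 - (1 - α) ^ t) / α := by
    intro t
    induction t with
    | zero => simp
    | succ n ih =>
      have hpow : (0:ℝ) ≤ (1 - α) ^ n := pow_nonneg hα' n
      have h1 : d (n + 1) ≤ (1 - α) * ((1 - α) ^ n * d 0 + ε * (1 - (1 - α) ^ n) / α) + ε :=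
        (hstep n).trans (by nlinarith)
      have h2 : (1 - α) * ((1 - α) ^ n * d 0 + ε * (1 - (1 - α) ^ n) / α) + ε
          = (1 - α) ^ (n + 1) * d 0 + ε * (1 - (1 - α) ^ (n + 1)) / α := by
        field_simp
        ring
      linarith [h1, h2.le, h2.ge]
  have havg : tvDist μ ((M : ENNReal)⁻¹ • ∑ t ∈ Finset.range M, iterBind ν Phat t)
      ≤ (M:ℝ)⁻¹ * ∑ t ∈ Finset.range M, d t := by
    apply tvDist_le _ _ (mul_nonneg (by positivity) (Finset.sum_nonneg fun t _ => hdnn t))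
    intro A hA
    have happ : (((M : ENNReal)⁻¹ • ∑ t ∈ Finset.range M, iterBind ν Phat t) A).toReal
        = (M:ℝ)⁻¹ * ∑ t ∈ Finset.range M, ((iterBind ν Phat t) A).toReal := by
      rw [Measure.smul_apply, Measure.finset_sum_apply, smul_eq_mul, ENNReal.toReal_mul,
        ENNReal.toReal_inv,
        ENNReal.toReal_sum fun t _ => (by haveI := hiter t; exact measure_ne_top _ _)]
      simp
    have hμA : (μ A).toReal = (M:ℝ)⁻¹ * ∑ _t ∈ Finset.range M, (μ A).toReal := by
      rw [Finset.sum_const, Finset.card_range, nsmul_eq_mul]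
      field_simp
    rw [happ, hμA, ← mul_sub, ← Finset.sum_sub_distrib, abs_mul,
      abs_of_nonneg (by positivity : (0:ℝ) ≤ (M:ℝ)⁻¹)]
    apply mul_le_mul_of_nonneg_left _ (by positivity : (0:ℝ) ≤ (M:ℝ)⁻¹)
    calc |∑ t ∈ Finset.range M, ((μ A).toReal - ((iterBind ν Phat t) A).toReal)|
        ≤ ∑ t ∈ Finset.range M, |(μ A).toReal - ((iterBind ν Phat t) A).toReal| :=
          Finset.abs_sum_le_sum_abs _ _
      _ ≤ ∑ t ∈ Finset.range M, d t := by
          apply Finset.sum_le_sum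
          intro t _
          haveI := hiter t
          exact abs_le_tvDist μ _ hA
  have hsum_le : (M:ℝ)⁻¹ * ∑ t ∈ Finset.range M, d t
      ≤ (M:ℝ)⁻¹ * ∑ t ∈ Finset.range M, ((1 - α) ^ t * d 0 + ε * (1 - (1 - α) ^ t) / α) := by
    apply mul_le_mul_of_nonneg_left _ (by positivity : (0:ℝ) ≤ (M:ℝ)⁻¹)
    exact Finset.sum_le_sum fun t _ => hbound t
  have hG : ∑ t ∈ Finset.range M, (1 - α) ^ t = (1 - (1 - α) ^ M) / α := by
    rw [geom_sum_eq (by intro h; linarith [sub_eq_iff_eq_add.mp h] : (1 - α) ≠ 1)]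
    rw [div_eq_div_iff (by linarith : (1:ℝ) - α - 1 ≠ 0) hα0.ne']
    ring
  have hfinal : (M:ℝ)⁻¹ * ∑ t ∈ Finset.range M, ((1 - α) ^ t * d 0 + ε * (1 - (1 - α) ^ t) / α)
      = (1 - (1 - α) ^ M) * d 0 / (M * α)
        - ε * (1 - (1 - α) ^ M) / (M * α ^ 2) + ε / α := by
    have hrw : ∀ t, (1 - α) ^ t * d 0 + ε * (1 - (1 - α) ^ t) / α
        = d 0 * (1 - α) ^ t + (ε / α - ε / α * (1 - α) ^ t) := by
      intro t
      field_simp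
    simp_rw [hrw]
    rw [Finset.sum_add_distrib, ← Finset.mul_sum, Finset.sum_sub_distrib, Finset.sum_const,
      Finset.card_range, ← Finset.mul_sum, hG, nsmul_eq_mul]
    field_simp
    ring
  rw [← hd0]
  calc tvDist μ ((M : ENNReal)⁻¹ • ∑ t ∈ Finset.range M, iterBind ν Phat t)
      ≤ (M:ℝ)⁻¹ * ∑ t ∈ Finset.range M, d t := havg
    _ ≤ (M:ℝ)⁻¹ * ∑ t ∈ Finset.range M, ((1 - α) ^ t * d 0 + ε * (1 - (1 - α) ^ t) / α) :=
        hsum_le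
    _ = _ := hfinal
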